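/- arXiv:2601.10753 — 2 statements merged into one kernel-verified Lean document; each statement's English description precedes it below -/
import Mathlib

section
/- For every s ∈ ℝ and every constant C > 0, any sequence (a^{(n)})_{n∈ℕ} of elements of ℓ²(ℤ) satisfying Σ_{k∈ℤ} (1+|k+1/2|²)^{s+1} |a^{(n)}_k|² ≤ C for all n has a subsequence that is Cauchy with respect to the norm given by (Σ_{k∈ℤ} (1+|k+1/2|²)^s |a_k|²)^{1/2}. -/
open Filter Topology

set_option maxHeartbeats 1000000

/-- For every `s ∈ ℝ` and `C > 0`, any sequence `(a⁽ⁿ⁾)` in `ℓ²(ℤ)`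
with `Σ_k (1+|k+1/2|²)^{s+1} |a⁽ⁿ⁾_k|² ≤ C` for all `n` has a subsequence that is Cauchy
for the norm `(Σ_k (1+|k+1/2|²)^s |a_k|²)^{1/2}`. -/
theorem weighted_bounded_has_cauchy_subsequence
    (s C : ℝ) (hC : 0 < C) (a : ℕ → lp (fun _ : ℤ => ℂ) 2)
    (hsum : ∀ n : ℕ,
      Summable fun k : ℤ =>
        (1 + |(k : ℝ) + 1 / 2| ^ 2) ^ (s + 1) * ‖(a n : ∀ _ : ℤ, ℂ) k‖ ^ 2)
    (hbdd : ∀ n : ℕ,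
      (∑' k : ℤ,
        (1 + |(k : ℝ) + 1 / 2| ^ 2) ^ (s + 1) * ‖(a n : ∀ _ : ℤ, ℂ) k‖ ^ 2) ≤ C) :
    ∃ φ : ℕ → ℕ, StrictMono φ ∧
      ∀ ε : ℝ, 0 < ε → ∃ N : ℕ, ∀ m ≥ N, ∀ n ≥ N,
        Real.sqrt (∑' k : ℤ,
          (1 + |(k : ℝ) + 1 / 2| ^ 2) ^ s *
            ‖(a (φ m) : ∀ _ : ℤ, ℂ) k - (a (φ n) : ∀ _ : ℤ, ℂ) k‖ ^ 2) < ε := by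
  set w : ℤ → ℝ := fun k => 1 + |(k : ℝ) + 1 / 2| ^ 2 with hw
  have hw1 : ∀ k, 1 ≤ w k := fun k => by
    have h := sq_nonneg (|(k : ℝ) + 1 / 2|)
    simp only [hw]; linarith
  have hw0 : ∀ k, 0 < w k := fun k => lt_of_lt_of_le one_pos (hw1 k)
  have hwp : ∀ (t : ℝ) k, 0 < w k ^ t := fun t k => Real.rpow_pos_of_pos (hw0 k) t
  -- coordinatewise bound
  set R : ℤ → ℝ := fun k => Real.sqrt (C / w k ^ (s + 1)) with hR
  have hcoord : ∀ n k, ‖(a n : ∀ _ : ℤ, ℂ) k‖ ≤ R k := by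
    intro n k
    have h1 : w k ^ (s + 1) * ‖(a n : ∀ _ : ℤ, ℂ) k‖ ^ 2 ≤ C := by
      refine le_trans ?_ (hbdd n)
      exact Summable.le_tsum (hsum n) k fun j _ => by positivity
    have h2 : ‖(a n : ∀ _ : ℤ, ℂ) k‖ ^ 2 ≤ C / w k ^ (s + 1) := by
      rw [le_div_iff₀ (hwp _ k)]; linarith
    exact (Real.le_sqrt (norm_nonneg _) (by positivity)).2 h2
  -- extract coordinatewise convergent subsequence by compactness
  have hK : IsCompact (Set.univ.pi fun k => Metric.closedBall (0:ℂ) (R k)) :=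
    isCompact_univ_pi fun k => isCompact_closedBall 0 (R k)
  obtain ⟨y, -, φ, hφ, hconv⟩ :=
    hK.isSeqCompact (x := fun n => ((a n : ∀ _ : ℤ, ℂ))) (fun n => by
      intro k _
      simpa [Metric.mem_closedBall, dist_eq_norm] using hcoord n k)
  have hptwise : ∀ k, Tendsto (fun n => (a (φ n) : ∀ _ : ℤ, ℂ) k) atTop (𝓝 (y k)) :=
    fun k => (tendsto_pi_nhds.1 hconv) k
  refine ⟨φ, hφ, ?_⟩
  intro ε hε
  -- choose cutoff K
  obtain ⟨K, hKge⟩ := exists_nat_ge (8 * C / ε ^ 2)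
  set M : ℝ := 1 + ((K : ℝ) + 1 / 2) ^ 2 with hM
  have hM0 : 0 < M := by positivity
  have hMK : (K : ℝ) ≤ M := by rw [hM]; nlinarith [sq_nonneg ((K:ℝ) - 1/2)]
  have hMbig : 8 * C / ε ^ 2 ≤ M := le_trans hKge hMK
  set F : Finset ℤ := Finset.Icc (-(K:ℤ)) K with hF
  have htailw : ∀ k : ℤ, k ∉ F → M ≤ w k := by
    intro k hk
    rw [hF, Finset.mem_Icc, not_and_or] at hk
    have habs : (K : ℝ) + 1 / 2 ≤ |(k : ℝ) + 1 / 2| := by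
      rcases hk with hk | hk
      · push_neg at hk
        have : (k : ℝ) ≤ -(K : ℝ) - 1 := by exact_mod_cast Int.le_of_lt_add_one (by omega)
        rw [abs_of_nonpos (by linarith)]; linarith
      · push_neg at hk
        have : (K : ℝ) + 1 ≤ (k : ℝ) := by exact_mod_cast hk
        rw [abs_of_nonneg (by linarith)]; linarith
    have h2 : ((K : ℝ) + 1 / 2) ^ 2 ≤ |(k : ℝ) + 1 / 2| ^ 2 := by
      apply sq_le_sq' <;> [linarith [abs_nonneg ((k:ℝ)+1/2)]; exact habs]
    simp only [hM, hw]; linarith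
  -- pointwise tail comparison
  have hptle : ∀ (q : ℝ), 0 ≤ q → ∀ k : ℤ, k ∉ F →
      w k ^ s * q ≤ (w k ^ (s + 1) * q) / M := by
    intro q hq k hk
    have hMw : M ≤ w k := htailw k hk
    have hws : w k ^ s = w k ^ (s + 1) / w k := by
      rw [Real.rpow_add (hw0 k), Real.rpow_one, mul_div_assoc, div_self (hw0 k).ne', mul_one]
    rw [hws, div_mul_eq_mul_div]
    gcongr
  -- tail estimate for a single sequence element
  have htail : ∀ n : ℕ,
      ∑' k : ((F : Set ℤ)ᶜ : Set ℤ), w (k:ℤ) ^ s * ‖(a n : ∀ _ : ℤ, ℂ) (k:ℤ)‖ ^ 2 ≤ C / M := by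
    intro n
    have hsubS : Summable fun k : ((F : Set ℤ)ᶜ : Set ℤ) =>
        w (k : ℤ) ^ (s + 1) * ‖(a n : ∀ _ : ℤ, ℂ) (k : ℤ)‖ ^ 2 := (hsum n).subtype _
    have hle : ∀ k : ((F : Set ℤ)ᶜ : Set ℤ),
        w (k : ℤ) ^ s * ‖(a n : ∀ _ : ℤ, ℂ) (k : ℤ)‖ ^ 2 ≤
          (w (k : ℤ) ^ (s + 1) * ‖(a n : ∀ _ : ℤ, ℂ) (k : ℤ)‖ ^ 2) / M :=
      fun k => hptle _ (by positivity) (k : ℤ) (fun h => k.2 (Finset.mem_coe.2 h))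
    have hSle : (∑' k : ((F : Set ℤ)ᶜ : Set ℤ),
        w (k:ℤ) ^ (s+1) * ‖(a n : ∀ _ : ℤ, ℂ) (k:ℤ)‖ ^ 2) ≤ C := by
      have hsplit := Summable.sum_add_tsum_compl (s := F) (hsum n)
      have hfin : (0:ℝ) ≤ ∑ k ∈ F, w k ^ (s+1) * ‖(a n : ∀ _ : ℤ, ℂ) k‖ ^ 2 :=
        Finset.sum_nonneg fun k _ => by positivity
      have := hbdd n
      rw [← hsplit] at this
      linarith
    calc ∑' k : ((F : Set ℤ)ᶜ : Set ℤ), w (k:ℤ) ^ s * ‖(a n : ∀ _ : ℤ, ℂ) (k:ℤ)‖ ^ 2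
        ≤ ∑' k : ((F : Set ℤ)ᶜ : Set ℤ),
            (w (k:ℤ) ^ (s+1) * ‖(a n : ∀ _ : ℤ, ℂ) (k:ℤ)‖ ^ 2) / M := by
          apply Summable.tsum_le_tsum hle
          · exact Summable.of_nonneg_of_le (fun k => by positivity) hle (hsubS.div_const M)
          · exact hsubS.div_const M
      _ = (∑' k : ((F : Set ℤ)ᶜ : Set ℤ),
            w (k:ℤ) ^ (s+1) * ‖(a n : ∀ _ : ℤ, ℂ) (k:ℤ)‖ ^ 2) / M := by rw [tsum_div_const]
      _ ≤ C / M := by gcongr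
  -- summability facts
  have hsumS : ∀ n : ℕ, Summable fun k : ℤ => w k ^ s * ‖(a n : ∀ _ : ℤ, ℂ) k‖ ^ 2 := by
    intro n
    apply Summable.of_nonneg_of_le (fun k => by positivity) _ (hsum n)
    intro k
    have := Real.rpow_le_rpow_of_exponent_le (hw1 k) (by linarith : s ≤ s + 1)
    have hq : (0:ℝ) ≤ ‖(a n : ∀ _ : ℤ, ℂ) k‖ ^ 2 := by positivity
    exact mul_le_mul_of_nonneg_right this hq
  -- the difference function and its properties, for fixed m n
  have hdiff : ∀ m n : ℕ,
      (∀ k : ℤ, w k ^ s * ‖(a (φ m) : ∀ _ : ℤ, ℂ) k - (a (φ n) : ∀ _ : ℤ, ℂ) k‖ ^ 2 ≤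
        2 * (w k ^ s * ‖(a (φ m) : ∀ _ : ℤ, ℂ) k‖ ^ 2) +
        2 * (w k ^ s * ‖(a (φ n) : ∀ _ : ℤ, ℂ) k‖ ^ 2)) := by
    intro m n k
    have h1 : ‖(a (φ m) : ∀ _ : ℤ, ℂ) k - (a (φ n) : ∀ _ : ℤ, ℂ) k‖ ≤
        ‖(a (φ m) : ∀ _ : ℤ, ℂ) k‖ + ‖(a (φ n) : ∀ _ : ℤ, ℂ) k‖ := norm_sub_le _ _
    have h2 : ‖(a (φ m) : ∀ _ : ℤ, ℂ) k - (a (φ n) : ∀ _ : ℤ, ℂ) k‖ ^ 2 ≤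
        2 * ‖(a (φ m) : ∀ _ : ℤ, ℂ) k‖ ^ 2 + 2 * ‖(a (φ n) : ∀ _ : ℤ, ℂ) k‖ ^ 2 := by
      nlinarith [h1, sq_nonneg (‖(a (φ m) : ∀ _ : ℤ, ℂ) k‖ - ‖(a (φ n) : ∀ _ : ℤ, ℂ) k‖),
        norm_nonneg ((a (φ m) : ∀ _ : ℤ, ℂ) k - (a (φ n) : ∀ _ : ℤ, ℂ) k),
        norm_nonneg ((a (φ m) : ∀ _ : ℤ, ℂ) k), norm_nonneg ((a (φ n) : ∀ _ : ℤ, ℂ) k)]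
    calc w k ^ s * ‖(a (φ m) : ∀ _ : ℤ, ℂ) k - (a (φ n) : ∀ _ : ℤ, ℂ) k‖ ^ 2
        ≤ w k ^ s * (2 * ‖(a (φ m) : ∀ _ : ℤ, ℂ) k‖ ^ 2 + 2 * ‖(a (φ n) : ∀ _ : ℤ, ℂ) k‖ ^ 2) :=
          mul_le_mul_of_nonneg_left h2 (hwp s k).le
      _ = 2 * (w k ^ s * ‖(a (φ m) : ∀ _ : ℤ, ℂ) k‖ ^ 2) +
          2 * (w k ^ s * ‖(a (φ n) : ∀ _ : ℤ, ℂ) k‖ ^ 2) := by ring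
  have hsumd : ∀ m n : ℕ, Summable fun k : ℤ =>
      w k ^ s * ‖(a (φ m) : ∀ _ : ℤ, ℂ) k - (a (φ n) : ∀ _ : ℤ, ℂ) k‖ ^ 2 := by
    intro m n
    apply Summable.of_nonneg_of_le (fun k => by positivity) (hdiff m n)
    exact ((hsumS (φ m)).mul_left 2).add ((hsumS (φ n)).mul_left 2)
  -- choose N from coordinatewise Cauchy on the finite set F
  set δ : ℝ := ε ^ 2 / (4 * ((F.card : ℝ) + 1)) with hδ
  have hδ0 : 0 < δ := by positivity
  have hNk : ∀ k : ℤ, ∃ Nk : ℕ, ∀ m ≥ Nk, ∀ n ≥ Nk,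
      w k ^ s * ‖(a (φ m) : ∀ _ : ℤ, ℂ) k - (a (φ n) : ∀ _ : ℤ, ℂ) k‖ ^ 2 < δ := by
    intro k
    have hcs : CauchySeq fun n => (a (φ n) : ∀ _ : ℤ, ℂ) k := (hptwise k).cauchySeq
    have hη : 0 < Real.sqrt (δ / w k ^ s) := Real.sqrt_pos.2 (by positivity)
    obtain ⟨N, hN⟩ := Metric.cauchySeq_iff.1 hcs _ hη
    refine ⟨N, fun m hm n hn => ?_⟩
    have hd := hN m hm n hn
    rw [dist_eq_norm] at hd
    have h2 : ‖(a (φ m) : ∀ _ : ℤ, ℂ) k - (a (φ n) : ∀ _ : ℤ, ℂ) k‖ ^ 2 < δ / w k ^ s := by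
      have := pow_lt_pow_left₀ hd (norm_nonneg _) (by norm_num : 2 ≠ 0)
      rwa [Real.sq_sqrt (by positivity : (0:ℝ) ≤ δ / w k ^ s)] at this
    calc w k ^ s * ‖(a (φ m) : ∀ _ : ℤ, ℂ) k - (a (φ n) : ∀ _ : ℤ, ℂ) k‖ ^ 2
        < w k ^ s * (δ / w k ^ s) := by
          exact mul_lt_mul_of_pos_left h2 (hwp s k)
      _ = δ := by field_simp; exact div_self (hwp s k).ne'
  choose Nf hNf using hNk
  refine ⟨F.sup Nf, fun m hm n hn => ?_⟩
  -- now estimate the sum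
  have hfinpart : ∑ k ∈ F, w k ^ s * ‖(a (φ m) : ∀ _ : ℤ, ℂ) k - (a (φ n) : ∀ _ : ℤ, ℂ) k‖ ^ 2
      ≤ ε ^ 2 / 4 := by
    have hterm : ∀ k ∈ F,
        w k ^ s * ‖(a (φ m) : ∀ _ : ℤ, ℂ) k - (a (φ n) : ∀ _ : ℤ, ℂ) k‖ ^ 2 ≤ δ := by
      intro k hk
      exact (hNf k m (le_trans (Finset.le_sup hk) hm) n (le_trans (Finset.le_sup hk) hn)).le
    calc ∑ k ∈ F, w k ^ s * ‖(a (φ m) : ∀ _ : ℤ, ℂ) k - (a (φ n) : ∀ _ : ℤ, ℂ) k‖ ^ 2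
        ≤ ∑ _k ∈ F, δ := Finset.sum_le_sum hterm
      _ = (F.card : ℝ) * δ := by rw [Finset.sum_const, nsmul_eq_mul]
      _ ≤ ((F.card : ℝ) + 1) * δ := by nlinarith
      _ = ε ^ 2 / 4 := by rw [hδ]; field_simp
  have htailpart : ∑' k : ((F : Set ℤ)ᶜ : Set ℤ),
      w (k:ℤ) ^ s * ‖(a (φ m) : ∀ _ : ℤ, ℂ) (k:ℤ) - (a (φ n) : ∀ _ : ℤ, ℂ) (k:ℤ)‖ ^ 2
      ≤ ε ^ 2 / 2 := by
    have hsub1 : Summable fun k : ((F : Set ℤ)ᶜ : Set ℤ) =>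
        w (k:ℤ) ^ s * ‖(a (φ m) : ∀ _ : ℤ, ℂ) (k:ℤ)‖ ^ 2 := (hsumS (φ m)).subtype _
    have hsub2 : Summable fun k : ((F : Set ℤ)ᶜ : Set ℤ) =>
        w (k:ℤ) ^ s * ‖(a (φ n) : ∀ _ : ℤ, ℂ) (k:ℤ)‖ ^ 2 := (hsumS (φ n)).subtype _
    have h4CM : 4 * (C / M) ≤ ε ^ 2 / 2 := by
      have h8 : 8 * C ≤ M * ε ^ 2 := by
        rw [div_le_iff₀ (by positivity : (0:ℝ) < ε ^ 2)] at hMbig; linarith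
      have h4 : 4 * (C / M) = 4 * C / M := by ring
      rw [h4, div_le_div_iff₀ hM0 (by norm_num : (0:ℝ) < 2)]
      linarith
    calc ∑' k : ((F : Set ℤ)ᶜ : Set ℤ),
          w (k:ℤ) ^ s * ‖(a (φ m) : ∀ _ : ℤ, ℂ) (k:ℤ) - (a (φ n) : ∀ _ : ℤ, ℂ) (k:ℤ)‖ ^ 2
        ≤ ∑' k : ((F : Set ℤ)ᶜ : Set ℤ),
            (2 * (w (k:ℤ) ^ s * ‖(a (φ m) : ∀ _ : ℤ, ℂ) (k:ℤ)‖ ^ 2) +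
             2 * (w (k:ℤ) ^ s * ‖(a (φ n) : ∀ _ : ℤ, ℂ) (k:ℤ)‖ ^ 2)) := by
          exact Summable.tsum_le_tsum (fun k => hdiff m n (k:ℤ)) ((hsumd m n).subtype _)
            ((hsub1.mul_left 2).add (hsub2.mul_left 2))
      _ = 2 * (∑' k : ((F : Set ℤ)ᶜ : Set ℤ),
              w (k:ℤ) ^ s * ‖(a (φ m) : ∀ _ : ℤ, ℂ) (k:ℤ)‖ ^ 2) +
          2 * (∑' k : ((F : Set ℤ)ᶜ : Set ℤ),
              w (k:ℤ) ^ s * ‖(a (φ n) : ∀ _ : ℤ, ℂ) (k:ℤ)‖ ^ 2) := by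
          rw [Summable.tsum_add (hsub1.mul_left 2) (hsub2.mul_left 2), tsum_mul_left, tsum_mul_left]
      _ ≤ 2 * (C / M) + 2 * (C / M) := by
          have t1 := htail (φ m); have t2 := htail (φ n)
          linarith
      _ = 4 * (C / M) := by ring
      _ ≤ ε ^ 2 / 2 := h4CM
  have hsplit := Summable.sum_add_tsum_compl (s := F) (hsumd m n)
  rw [Real.sqrt_lt' hε, ← hsplit]
  have : ε ^ 2 / 4 + ε ^ 2 / 2 < ε ^ 2 := by nlinarith
  linarith [hfinpart, htailpart]
end

section
/- The derivative at s = 0 of the (analytically continued) Hurwitz zeta function s ↦ ζ(s, 1/2) equals −(1/2)·log 2. -/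
open Complex HurwitzZeta Set

lemma hurwitzZeta_half_eq_of_one_lt_re {s : ℂ} (hs : 1 < s.re) :
    hurwitzZeta ((1 / 2 : ℝ) : UnitAddCircle) s = ((2 : ℂ) ^ s - 1) * riemannZeta s := by
  have hs0 : s ≠ 0 := fun h => by rw [h] at hs; simp at hs; linarith
  have h2 : (2 : ℂ) ^ s ≠ 0 := fun h => two_ne_zero ((cpow_eq_zero_iff _ _).mp h).1
  set f : ℕ → ℂ := fun n => 1 / (n : ℂ) ^ s with hf
  have hsum : Summable f := by
    simpa [hf, one_div] using (Complex.summable_one_div_nat_cpow.mpr hs)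
  have hζ : HasSum f (riemannZeta s) := by
    rw [zeta_eq_tsum_one_div_nat_cpow hs]
    exact hsum.hasSum
  -- even part
  have heq : ∀ k : ℕ, f (2 * k) = (2 : ℂ) ^ (-s) * f k := by
    intro k
    simp only [hf]
    rcases Nat.eq_zero_or_pos k with rfl | hk
    · simp [Complex.zero_cpow hs0]
    · have : ((2 * k : ℕ) : ℂ) = ((2 : ℝ) : ℂ) * ((k : ℝ) : ℂ) := by push_cast; ring
      rw [this, mul_cpow_ofReal_nonneg (by norm_num) (Nat.cast_nonneg k)]
      rw [cpow_neg]
      push_cast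
      field_simp
  have heven : HasSum (fun k => f (2 * k)) ((2 : ℂ) ^ (-s) * riemannZeta s) := by
    have := hζ.mul_left ((2 : ℂ) ^ (-s))
    simpa only [← heq] using this
  -- odd part
  have hodds : Summable (fun k => f (2 * k + 1)) :=
    hsum.comp_injective (fun a b hab => by omega)
  have hodd := hodds.hasSum
  have htot := heven.even_add_odd hodd
  have hoval : ∑' k, f (2 * k + 1) = riemannZeta s - (2 : ℂ) ^ (-s) * riemannZeta s := by
    have := htot.unique hζ
    linear_combination this
  rw [hoval] at hodd
  -- Hurwitz side
  have hH := hasSum_hurwitzZeta_of_one_lt_re (a := (1 / 2 : ℝ)) (by norm_num) hs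
  have hterm : ∀ n : ℕ, (1 : ℂ) / ((n : ℂ) + ((1 / 2 : ℝ) : ℂ)) ^ s
      = (2 : ℂ) ^ s * f (2 * n + 1) := by
    intro n
    have h1 : ((n : ℂ) + ((1 / 2 : ℝ) : ℂ)) = (((2 * n + 1 : ℕ) : ℝ) : ℂ) * ((1 / 2 : ℝ) : ℂ) := by
      push_cast; ring
    rw [h1, mul_cpow_ofReal_nonneg (by positivity) (by norm_num)]
    have h3 : (((1 / 2 : ℝ)) : ℂ) ^ s = ((2 : ℂ) ^ s)⁻¹ := by
      rw [show (((1 / 2 : ℝ)) : ℂ) = (2 : ℂ)⁻¹ by norm_num,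
        inv_cpow _ _ (by
          rw [show (2 : ℂ) = ((2 : ℝ) : ℂ) by norm_num,
            Complex.arg_ofReal_of_nonneg (by norm_num)]
          exact Real.pi_ne_zero.symm)]
    rw [h3]
    simp only [hf]
    push_cast
    field_simp
  have hH2 : HasSum (fun n : ℕ => (2 : ℂ) ^ s * f (2 * n + 1))
      (hurwitzZeta ((1 / 2 : ℝ) : UnitAddCircle) s) := by
    refine hH.congr_fun fun n => (hterm n).symm
  have hH3 := (hodd.mul_left ((2 : ℂ) ^ s)).unique hH2
  rw [← hH3, cpow_neg]
  field_simp

lemma hurwitzZeta_half_eq {s : ℂ} (hs : s ≠ 1) :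
    hurwitzZeta ((1 / 2 : ℝ) : UnitAddCircle) s = ((2 : ℂ) ^ s - 1) * riemannZeta s := by
  let U : Set ℂ := {z | z ≠ 1}
  have hUo : IsOpen U := isOpen_compl_singleton
  have hf : AnalyticOnNhd ℂ (fun z => hurwitzZeta ((1 / 2 : ℝ) : UnitAddCircle) z) U := by
    refine DifferentiableOn.analyticOnNhd (fun u hu => ?_) hUo
    exact (differentiableAt_hurwitzZeta _ hu).differentiableWithinAt
  have hg : AnalyticOnNhd ℂ (fun z => ((2 : ℂ) ^ z - 1) * riemannZeta z) U := by
    refine DifferentiableOn.analyticOnNhd (fun u hu => ?_) hUo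
    exact (((differentiableAt_id.const_cpow (Or.inl two_ne_zero)).sub_const 1).mul
      (differentiableAt_riemannZeta hu)).differentiableWithinAt
  have hUc : IsPreconnected U :=
    (isConnected_compl_singleton_of_one_lt_rank (by simp) _).isPreconnected
  have hUmem : (2 : ℂ) ∈ U := by norm_num [U]
  refine hf.eqOn_of_preconnected_of_eventuallyEq hg hUc hUmem ?_ hs
  have hV : {z : ℂ | 1 < z.re} ∈ nhds (2 : ℂ) :=
    (continuous_re.isOpen_preimage _ isOpen_Ioi).mem_nhds (by simp)
  filter_upwards [hV] with z hz using hurwitzZeta_half_eq_of_one_lt_re hz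

/-- The derivative at `s = 0` of the analytically continued Hurwitz
zeta function `s ↦ ζ(s, 1/2)` equals `−(1/2)·log 2`. -/
theorem deriv_hurwitzZeta_half_at_zero :
    deriv (fun s : ℂ => HurwitzZeta.hurwitzZeta ((1 / 2 : ℝ) : UnitAddCircle) s) 0 =
      -(1 / 2 : ℂ) * (Real.log 2 : ℂ) := by
  have hev : (fun s : ℂ => HurwitzZeta.hurwitzZeta ((1 / 2 : ℝ) : UnitAddCircle) s)
      =ᶠ[nhds (0 : ℂ)] fun z => ((2 : ℂ) ^ z - 1) * riemannZeta z := by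
    have h1 : {z : ℂ | z ≠ 1} ∈ nhds (0 : ℂ) :=
      isOpen_compl_singleton.mem_nhds (by norm_num)
    filter_upwards [h1] with z hz using hurwitzZeta_half_eq hz
  rw [hev.deriv_eq]
  have hd1 : HasDerivAt (fun z : ℂ => (2 : ℂ) ^ z - 1)
      ((2 : ℂ) ^ (0 : ℂ) * Complex.log 2) 0 :=
    ((hasStrictDerivAt_const_cpow (Or.inl two_ne_zero)).hasDerivAt).sub_const 1
  have hd2 : HasDerivAt riemannZeta (deriv riemannZeta 0) 0 :=
    (differentiableAt_riemannZeta (by norm_num)).hasDerivAt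
  have := (show HasDerivAt (fun z : ℂ => ((2 : ℂ) ^ z - 1) * riemannZeta z) _ 0 from hd1.mul hd2).deriv
  rw [this, riemannZeta_zero]
  have hlog : Complex.log 2 = (Real.log 2 : ℂ) := by
    rw [show (2 : ℂ) = ((2 : ℝ) : ℂ) by norm_num, Complex.ofReal_log (by norm_num)]
  rw [hlog]
  simp [Complex.cpow_zero]
  ring
end
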